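/- For every positive integer n, sum_{k=1}^n (-1)^k * binom(n,k) * binom(n+k,k) / k = -2 * H(n), where H(n) = sum_{j=1}^n 1/j. -/

import Mathlib

open Polynomial Finset

/-- Key binomial identity: ∑_{k=0}^m (-1)^k C(m,k) C(r+k,k) = (-1)^m C(r,m). -/
lemma key_alt_sum (m r : ℕ) :
    ∑ k ∈ Finset.range (m + 1),
      (-1 : ℚ) ^ k * (Nat.choose m k : ℚ) * (Nat.choose (r + k) k : ℚ)
      = (-1 : ℚ) ^ m * (Nat.choose r m : ℚ) := by
  have hpoly : ∑ k ∈ Finset.range (m + 1),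
      Polynomial.C ((-1 : ℚ) ^ k * (Nat.choose m k : ℚ)) * (1 + X) ^ (r + k)
      = Polynomial.C ((-1 : ℚ) ^ m) * ((1 + X) ^ r * X ^ m) := by
    have h1 : ∀ k ∈ Finset.range (m + 1),
        Polynomial.C ((-1 : ℚ) ^ k * (Nat.choose m k : ℚ)) * (1 + X) ^ (r + k)
        = (1 + X) ^ r * ((-(1 + X)) ^ k * 1 ^ (m - k) * (Nat.choose m k : ℚ[X])) := by
      intro k _
      rw [pow_add, neg_pow (1 + X : ℚ[X]) k]
      simp only [map_mul, map_pow, map_neg, map_one, map_natCast]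
      ring
    rw [Finset.sum_congr rfl h1, ← Finset.mul_sum, ← add_pow (-(1+X)) 1 m]
    have h2 : (-(1 + X) + 1 : ℚ[X]) = -X := by ring
    rw [h2, neg_pow (X : ℚ[X]) m]
    simp only [map_mul, map_pow, map_neg, map_one]
    ring
  have hco := congrArg (fun p => Polynomial.coeff p r) hpoly
  simp only [Polynomial.finset_sum_coeff, Polynomial.coeff_C_mul,
    Polynomial.coeff_one_add_X_pow, coeff_mul_X_pow'] at hco
  have hL : ∀ k ∈ Finset.range (m + 1),
      (-1 : ℚ) ^ k * (Nat.choose m k : ℚ) * ((r + k).choose r : ℚ)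
      = (-1 : ℚ) ^ k * (Nat.choose m k : ℚ) * (Nat.choose (r + k) k : ℚ) := by
    intro k _
    rw [Nat.choose_symm_add]
  rw [Finset.sum_congr rfl hL] at hco
  rw [hco]
  by_cases hmr : m ≤ r
  · rw [if_pos hmr, Nat.choose_symm hmr]
  · rw [if_neg hmr, Nat.choose_eq_zero_of_lt (Nat.lt_of_not_le hmr)]
    simp

/-- C(2n+2, n+1) = 2 C(2n+1, n+1). -/
lemma central_double (n : ℕ) :
    Nat.choose (2 * n + 2) (n + 1) = 2 * Nat.choose (2 * n + 1) (n + 1) := by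
  have h : 2 * n + 2 = (2 * n + 1) + 1 := by ring
  rw [h, Nat.choose_succ_succ' (2 * n + 1) n]
  have hsymm : Nat.choose (2 * n + 1) n = Nat.choose (2 * n + 1) (n + 1) := by
    have h0 : Nat.choose (2 * n + 1) ((2 * n + 1) - (n + 1)) = Nat.choose (2 * n + 1) (n + 1) :=
      Nat.choose_symm (by omega)
    have h2 : (2 * n + 1) - (n + 1) = n := by omega
    rwa [h2] at h0
  omega

/-- The main statement over `range (n+1)` (k = 0 terms vanish by division by zero). -/
lemma main_range (n : ℕ) :
    ∑ k ∈ Finset.range (n + 1),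
        (-1 : ℚ) ^ k * (Nat.choose n k : ℚ) * (Nat.choose (n + k) k : ℚ) / (k : ℚ) =
      -2 * ∑ j ∈ Finset.range (n + 1), (1 : ℚ) / (j : ℚ) := by
  induction n with
  | zero => simp
  | succ n ih =>
      rw [Finset.sum_range_succ, Finset.sum_range_succ (f := fun j => (1 : ℚ) / (j : ℚ))]
      -- rewrite each summand for k ≤ n (with a correction at k = 0)
      have hterm : ∀ k ∈ Finset.range (n + 1),
          (-1 : ℚ) ^ k * (Nat.choose (n+1) k : ℚ) * (Nat.choose (n+1+k) k : ℚ) / (k : ℚ)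
            + (if k = 0 then 2 / ((n : ℚ) + 1) else 0)
          = (-1 : ℚ) ^ k * (Nat.choose n k : ℚ) * (Nat.choose (n+k) k : ℚ) / (k : ℚ)
            + (2 / ((n : ℚ) + 1)) * ((-1 : ℚ) ^ k * (Nat.choose (n+1) k : ℚ) * (Nat.choose (n+k) k : ℚ)) := by
        intro k hk
        rcases Nat.eq_zero_or_pos k with rfl | hkpos
        · simp
        rw [if_neg (by omega)]
        have hkn : k ≤ n := Nat.lt_succ_iff.mp (Finset.mem_range.mp hk)
        -- relation 1 : C(n+1, k) * (n+1-k) = C(n,k) * (n+1)  (over ℚ)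
        have h1 : ((Nat.choose (n+1) k : ℚ)) * ((n : ℚ) + 1 - (k : ℚ))
            = (Nat.choose n k : ℚ) * ((n : ℚ) + 1) := by
          have h := Nat.choose_mul_succ_eq n k
          have hcast := congrArg (fun x : ℕ => (x : ℚ)) h
          push_cast [Nat.cast_sub (by omega : k ≤ n + 1)] at hcast
          linarith
        -- relation 2 : C(n+1+k, k) * (n+1) = C(n+k, k) * (n+1+k)
        have h2 : ((Nat.choose (n+1+k) k : ℚ)) * ((n : ℚ) + 1)
            = (Nat.choose (n+k) k : ℚ) * ((n : ℚ) + 1 + (k : ℚ)) := by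
          have hs := Nat.add_one_mul_choose_eq (n + k) n
          have hsym1 : Nat.choose (n + k) n = Nat.choose (n + k) k := Nat.choose_symm_add
          have hsym2 : Nat.choose (n + k + 1) (n + 1) = Nat.choose (n + 1 + k) k := by
            have h0 : Nat.choose ((n+1) + k) (n+1) = Nat.choose ((n+1) + k) k := Nat.choose_symm_add
            rw [← h0]; congr 1; omega
          rw [hsym1, hsym2] at hs
          have hcast := congrArg (fun x : ℕ => (x : ℚ)) hs
          push_cast at hcast
          linarith
        have hk0 : (k : ℚ) ≠ 0 := Nat.cast_ne_zero.mpr (by omega)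
        have hn1 : ((n : ℚ) + 1) ≠ 0 := by positivity
        have hnk : ((n : ℚ) + 1 - (k : ℚ)) ≠ 0 := by
          have hle : (k : ℚ) ≤ n := by exact_mod_cast hkn
          intro h; nlinarith
        have e1 : (Nat.choose (n+1) k : ℚ)
            = (Nat.choose n k : ℚ) * ((n : ℚ) + 1) / ((n : ℚ) + 1 - (k : ℚ)) := by
          field_simp; linarith [h1]
        have e2 : (Nat.choose (n+1+k) k : ℚ)
            = (Nat.choose (n+k) k : ℚ) * ((n : ℚ) + 1 + (k : ℚ)) / ((n : ℚ) + 1) := by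
          field_simp; linarith [h2]
        rw [e1, e2]
        field_simp
        ring
      have hsum := Finset.sum_congr rfl hterm
      rw [Finset.sum_add_distrib, Finset.sum_add_distrib, Finset.sum_ite_eq'
        (Finset.range (n+1)) 0 (fun _ => 2 / ((n : ℚ) + 1))] at hsum
      rw [if_pos (Finset.mem_range.mpr (by omega))] at hsum
      rw [ih, ← Finset.mul_sum] at hsum
      -- evaluate T = ∑_{k=0}^n (-1)^k C(n+1,k) C(n+k,k) = (-1)^n C(2n+1, n+1)
      have hT : ∑ k ∈ Finset.range (n + 1),
          (-1 : ℚ) ^ k * (Nat.choose (n+1) k : ℚ) * (Nat.choose (n+k) k : ℚ)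
          = (-1 : ℚ) ^ n * (Nat.choose (2*n+1) (n+1) : ℚ) := by
        have hkey := key_alt_sum (n + 1) n
        rw [Finset.sum_range_succ] at hkey
        have hlast : (-1 : ℚ) ^ (n+1) * (Nat.choose (n+1) (n+1) : ℚ)
            * (Nat.choose (n + (n+1)) (n+1) : ℚ)
            = -((-1 : ℚ) ^ n * (Nat.choose (2*n+1) (n+1) : ℚ)) := by
          have h0 : n + (n + 1) = 2 * n + 1 := by ring
          rw [h0, Nat.choose_self]
          ring
        have hz : ((Nat.choose n (n+1) : ℕ) : ℚ) = 0 := by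
          rw [Nat.choose_eq_zero_of_lt (by omega)]; simp
        rw [hlast, hz, mul_zero] at hkey
        linarith
      rw [hT] at hsum
      -- hsum : ∑ f(n+1) + 2/(n+1) = -2H(n) + 2/(n+1) * ((-1)^n C(2n+1,n+1))
      -- the top term k = n+1
      have htop : (-1 : ℚ) ^ (n+1) * (Nat.choose (n+1) (n+1) : ℚ)
          * (Nat.choose (n+1+(n+1)) (n+1) : ℚ) / ((n : ℚ) + 1 : ℚ)
          = (-1 : ℚ) ^ (n+1) * (2 * (Nat.choose (2*n+1) (n+1) : ℚ)) / ((n : ℚ) + 1) := by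
        have h1 : n + 1 + (n + 1) = 2 * n + 2 := by ring
        rw [h1, Nat.choose_self, central_double n]
        push_cast
        ring
      have hn1 : ((n : ℚ) + 1) ≠ 0 := by positivity
      push_cast at hsum htop ⊢
      rw [htop]
      field_simp at hsum ⊢
      linear_combination hsum

/-- ∑_{k=1}^n (-1)^k C(n,k) C(n+k,k)/k = -2 H(n). -/
theorem alternating_sum_eq_neg_two_harmonic (n : ℕ) (hn : 0 < n) :
    ∑ k ∈ Finset.Icc 1 n,
        (-1 : ℚ) ^ k * (Nat.choose n k : ℚ) * (Nat.choose (n + k) k : ℚ) / (k : ℚ) =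
      -2 * ∑ j ∈ Finset.Icc 1 n, (1 : ℚ) / (j : ℚ) := by
  have hsub : Finset.Icc 1 n ⊆ Finset.range (n + 1) := by
    intro k hk
    simp only [Finset.mem_Icc] at hk
    exact Finset.mem_range.mpr (by omega)
  have hzero : ∀ k ∈ Finset.range (n + 1), k ∉ Finset.Icc 1 n → k = 0 := by
    intro k hkr hk
    simp only [Finset.mem_range] at hkr
    simp only [Finset.mem_Icc, not_and, not_le] at hk
    omega
  have h1 : ∑ k ∈ Finset.Icc 1 n,
        (-1 : ℚ) ^ k * (Nat.choose n k : ℚ) * (Nat.choose (n + k) k : ℚ) / (k : ℚ)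
      = ∑ k ∈ Finset.range (n + 1),
        (-1 : ℚ) ^ k * (Nat.choose n k : ℚ) * (Nat.choose (n + k) k : ℚ) / (k : ℚ) := by
    refine Finset.sum_subset hsub ?_
    intro k hkr hk
    have hk0 : k = 0 := hzero k hkr hk
    subst hk0; simp
  have h2 : ∑ j ∈ Finset.Icc 1 n, (1 : ℚ) / (j : ℚ)
      = ∑ j ∈ Finset.range (n + 1), (1 : ℚ) / (j : ℚ) := by
    refine Finset.sum_subset hsub ?_
    intro k hkr hk
    have hk0 : k = 0 := hzero k hkr hk
    subst hk0; simp
  rw [h1, h2]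
  exact main_range n
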